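/- arXiv:1412.7574 — 3 statements merged into one kernel-verified Lean document; each statement's English description precedes it below -/
import Mathlib

section
/- The difference L_even(n) − L_odd(n) between the number of even and odd Latin squares of order n equals (-1)^(n(n-1)/2) times the coefficient of the monomial ∏_{i,j=1}^n X_{ij} in the polynomial det(X)^n, where X = (X_{ij}) is an n×n matrix of indeterminates. -/
open Finset

/-- A Latin square of order `n`, viewed as a tuple `(σ₁, …, σₙ)` of permutations whose
permutation matrices sum to the all-ones matrix: for every cell `(i,j)` there is exactly
one `m` with `σₘ i = j`. -/
def IsLatin {n : ℕ} (σ : Fin n → Equiv.Perm (Fin n)) : Prop :=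
  ∀ i j : Fin n, (Finset.univ.filter fun m => σ m i = j).card = 1

instance {n : ℕ} : DecidablePred (IsLatin (n := n)) := fun σ => by
  unfold IsLatin; infer_instance

/-- The finite set of Latin squares of order `n`. -/
def latinSquares (n : ℕ) : Finset (Fin n → Equiv.Perm (Fin n)) :=
  Finset.univ.filter IsLatin

/-- The sign of a Latin square: `(-1)^(n(n-1)/2) ∏ᵢ sign σᵢ`. -/
def signLS {n : ℕ} (σ : Fin n → Equiv.Perm (Fin n)) : ℤˣ :=
  (-1) ^ (n * (n - 1) / 2) * ∏ i, Equiv.Perm.sign (σ i)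

/-- The number of even Latin squares of order `n`. -/
def Leven (n : ℕ) : ℕ := ((latinSquares n).filter fun σ => signLS σ = 1).card

/-- The number of odd Latin squares of order `n`. -/
def Lodd (n : ℕ) : ℕ := ((latinSquares n).filter fun σ => signLS σ = -1).card

open MvPolynomial

/-- The determinant of the `n × n` matrix of indeterminates `X = (X_{ij})`, as a
multivariate polynomial with integer coefficients. -/
noncomputable def detX (n : ℕ) : MvPolynomial (Fin n × Fin n) ℤ :=
  Matrix.det (Matrix.of fun i j => (X (i, j) : MvPolynomial (Fin n × Fin n) ℤ))

/-- The all-ones multiindex, i.e. the exponent vector of the monomial `∏_{i,j} X_{ij}`. -/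
noncomputable def allOnes (n : ℕ) : (Fin n × Fin n) →₀ ℕ :=
  Finsupp.equivFunOnFinite.symm fun _ => 1

/-- `α! := ∏ (α_{ij})!` for a multiindex `α`. -/
def mfact {σ : Type*} (α : σ →₀ ℕ) : ℕ := α.prod fun _ m => m.factorial

lemma prod_monomial {ι σ : Type*} (s : Finset ι) (d : ι → (σ →₀ ℕ)) (c : ι → ℤ) :
    ∏ i ∈ s, (monomial (d i) (c i) : MvPolynomial σ ℤ) =
      monomial (∑ i ∈ s, d i) (∏ i ∈ s, c i) := by
  classical
  induction s using Finset.induction with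
  | empty => simp [monomial_eq]
  | insert _ _ h ih => simp [Finset.prod_insert h, Finset.sum_insert h, ih, monomial_mul]

lemma detX_eq (n : ℕ) :
    detX n = ∑ τ : Equiv.Perm (Fin n),
      monomial (∑ i, Finsupp.single (τ i, i) 1) ((Equiv.Perm.sign τ : ℤ)) := by
  rw [detX, Matrix.det_apply']
  refine Finset.sum_congr rfl fun τ _ => ?_
  have h1 : ∏ i, (Matrix.of fun i j => (X (i, j) : MvPolynomial (Fin n × Fin n) ℤ)) (τ i) i
      = monomial (∑ i, Finsupp.single (τ i, i) 1) (∏ _i : Fin n, (1:ℤ)) := by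
    rw [← prod_monomial]; rfl
  rw [h1, Finset.prod_const_one,
    show (((Equiv.Perm.sign τ : ℤ) : MvPolynomial (Fin n × Fin n) ℤ))
      = C ((Equiv.Perm.sign τ : ℤ)) from
        (map_intCast (C : ℤ →+* MvPolynomial (Fin n × Fin n) ℤ) _).symm,
    C_mul_monomial, mul_one]

lemma exponent_apply {n : ℕ} (σ : Fin n → Equiv.Perm (Fin n)) (j i : Fin n) :
    (∑ m, ∑ k, Finsupp.single ((σ m) k, k) (1:ℕ)) (j, i) =
      (Finset.univ.filter fun m => σ m i = j).card := by
  classical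
  rw [Finsupp.finset_sum_apply, Finset.card_filter]
  refine Finset.sum_congr rfl fun m _ => ?_
  rw [Finsupp.finset_sum_apply]
  simp_rw [Finsupp.single_apply, Prod.mk.injEq, and_comm (a := (σ m) _ = j), ite_and]
  rw [Finset.sum_ite_eq' Finset.univ i fun k => if (σ m) k = j then 1 else 0]
  simp

lemma exponent_eq_iff {n : ℕ} (σ : Fin n → Equiv.Perm (Fin n)) :
    (∑ m, ∑ k, Finsupp.single ((σ m) k, k) (1:ℕ)) = allOnes n ↔ IsLatin σ := by
  classical
  rw [Finsupp.ext_iff]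
  constructor
  · intro h i j
    have := h (j, i)
    rwa [exponent_apply, show (allOnes n) (j, i) = 1 from rfl] at this
  · intro h p
    rw [show (allOnes n) p = 1 from rfl, ← Prod.mk.eta (p := p), exponent_apply]
    exact h p.2 p.1

lemma coeff_eq (n : ℕ) :
    MvPolynomial.coeff (allOnes n) ((detX n) ^ n) =
      ∑ σ ∈ latinSquares n, ((∏ i, Equiv.Perm.sign (σ i) : ℤˣ) : ℤ) := by
  classical
  rw [show (detX n) ^ n = ∏ _m : Fin n, detX n by simp]
  simp_rw [detX_eq, Finset.prod_univ_sum]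
  rw [Fintype.piFinset_univ, MvPolynomial.coeff_sum, latinSquares, Finset.sum_filter]
  refine Finset.sum_congr rfl fun σ _ => ?_
  rw [prod_monomial, coeff_monomial]
  by_cases h : IsLatin σ
  · rw [if_pos ((exponent_eq_iff σ).mpr h), if_pos h,
      show ((∏ i, Equiv.Perm.sign (σ i) : ℤˣ) : ℤ) = ∏ i, ((Equiv.Perm.sign (σ i) : ℤ))
        from map_prod (Units.coeHom ℤ) _ _]
  · rw [if_neg (fun hc => h ((exponent_eq_iff σ).mp hc)), if_neg h]

/-- `L_even(n) − L_odd(n) = (-1)^(n(n-1)/2) ·` (the coefficient of `∏_{i,j} X_{ij}`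
in `det(X)^n`). -/
theorem diff_eq_coeff (n : ℕ) :
    (Leven n : ℤ) - (Lodd n : ℤ) =
      (-1) ^ (n * (n - 1) / 2) * MvPolynomial.coeff (allOnes n) ((detX n) ^ n) := by
  classical
  rw [coeff_eq, Finset.mul_sum]
  have h2 : ∀ σ ∈ latinSquares n,
      (-1:ℤ)^(n*(n-1)/2) * ((∏ i, Equiv.Perm.sign (σ i) : ℤˣ) : ℤ) = ((signLS σ : ℤ)) := by
    intro σ _
    simp [signLS]
  rw [Finset.sum_congr rfl h2]
  have hnot : (latinSquares n).filter (fun σ => ¬ signLS σ = 1)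
      = (latinSquares n).filter (fun σ => signLS σ = -1) := by
    refine Finset.filter_congr fun σ _ => ?_
    rcases Int.units_eq_one_or (signLS σ) with h | h <;> simp [h]
  rw [← Finset.sum_filter_add_sum_filter_not (latinSquares n) (fun σ => signLS σ = 1), hnot]
  have e1 : ∑ σ ∈ (latinSquares n).filter (fun σ => signLS σ = 1), ((signLS σ : ℤ)) = (Leven n : ℤ) := by
    rw [Finset.sum_congr rfl fun σ hσ => by rw [(Finset.mem_filter.mp hσ).2, Units.val_one]]
    simp [Leven]
  have e2 : ∑ σ ∈ (latinSquares n).filter (fun σ => signLS σ = -1), ((signLS σ : ℤ)) = -(Lodd n : ℤ) := by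
    rw [Finset.sum_congr rfl fun σ hσ => by rw [(Finset.mem_filter.mp hσ).2, Units.val_neg, Units.val_one]]
    simp [Lodd]
  rw [e1, e2]
  ring
end

section
/- For every ε > 0 there exists N such that for all n ≥ N: |∑_{a=1}^n ∑_{b=a}^{a+n-1} log b − (n² log n − n²(3/2 − log 4))| ≤ ε n². Equivalently, log(n!(n+1)!⋯(2n-1)!/(0!1!⋯(n-1)!)) = n² log n − n²(3/2 − log 4) + o(n²). -/
open Finset Real


noncomputable def gg (x : ℝ) : ℝ := x * Real.log x - x
noncomputable def GG (x : ℝ) : ℝ := x ^ 2 / 2 * Real.log x - 3 * x ^ 2 / 4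

lemma hasDerivAt_gg {x : ℝ} (hx : 0 < x) : HasDerivAt gg (Real.log x) x := by
  have h : HasDerivAt (fun x : ℝ => x * Real.log x - x)
      (1 * Real.log x + x * x⁻¹ - 1) x :=
    ((hasDerivAt_id x).mul (Real.hasDerivAt_log hx.ne')).sub (hasDerivAt_id x)
  convert h using 1
  · rfl
  · have hx1 : x * x⁻¹ = 1 := mul_inv_cancel₀ hx.ne'
    linear_combination (-1 : ℝ) * hx1

lemma hasDerivAt_GG {x : ℝ} (hx : 0 < x) : HasDerivAt GG (gg x) x := by
  have h : HasDerivAt (fun x : ℝ => x ^ 2 / 2 * Real.log x - 3 * x ^ 2 / 4)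
      ((2 * x ^ 1 / 2) * Real.log x + x ^ 2 / 2 * x⁻¹ - 3 * (2 * x ^ 1) / 4) x :=
    (((hasDerivAt_pow 2 x).div_const 2).mul (Real.hasDerivAt_log hx.ne')).sub
      (((hasDerivAt_pow 2 x).const_mul 3).div_const 4)
  convert h using 1
  · rfl
  · have hx1 : x * x⁻¹ = 1 := mul_inv_cancel₀ hx.ne'
    unfold gg; linear_combination (-(x/2)) * hx1

lemma gg_contOn : ContinuousOn gg (Set.Ici 1) := by
  intro x hx
  have hx0 : (0:ℝ) < x := lt_of_lt_of_le one_pos hx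
  exact (((continuousAt_id).mul (Real.continuousAt_log hx0.ne')).sub
    continuousAt_id).continuousWithinAt

lemma log_contOn : ContinuousOn Real.log (Set.Ici 1) := by
  intro x hx
  exact (Real.continuousAt_log (lt_of_lt_of_le one_pos hx).ne').continuousWithinAt

lemma log_monoOn : MonotoneOn Real.log (Set.Ici 1) := fun _x hx _y _ hxy =>
  Real.log_le_log (lt_of_lt_of_le one_pos hx) hxy

lemma gg_monoOn : MonotoneOn gg (Set.Ici 1) := by
  apply monotoneOn_of_deriv_nonneg (convex_Ici 1) gg_contOn
  · intro x hx
    rw [interior_Ici] at hx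
    exact (hasDerivAt_gg (lt_trans one_pos hx)).differentiableAt.differentiableWithinAt
  · intro x hx
    rw [interior_Ici] at hx
    rw [(hasDerivAt_gg (lt_trans one_pos hx)).deriv]
    exact Real.log_nonneg hx.le

section generic
variable (f F : ℝ → ℝ)
variable (hd : ∀ x : ℝ, 1 ≤ x → HasDerivAt F (f x) x)
variable (hm : MonotoneOn f (Set.Ici 1))
variable (hc : ContinuousOn f (Set.Ici 1))

include hd hm hc in
lemma cell_bound {m : ℝ} (h1 : 1 ≤ m) :
    f m ≤ F (m + 1) - F m ∧ F (m + 1) - F m ≤ f (m + 1) := by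
  have hsub : Set.uIcc m (m+1) ⊆ Set.Ici 1 := by
    rw [Set.uIcc_of_le (by linarith)]
    exact fun x hx => le_trans h1 hx.1
  have hint : IntervalIntegrable f MeasureTheory.volume m (m+1) :=
    (hc.mono hsub).intervalIntegrable
  have heq : ∫ x in m..(m+1), f x = F (m+1) - F m := by
    apply intervalIntegral.integral_eq_sub_of_hasDerivAt
    · intro x hx
      exact hd x (le_trans h1 (by rw [Set.uIcc_of_le (by linarith)] at hx; exact hx.1))
    · exact hint
  have hIcc : Set.Icc m (m+1) ⊆ Set.Ici 1 := fun x hx => le_trans h1 hx.1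
  constructor
  · rw [← heq]
    have : ∫ _x in m..(m+1), f m = f m := by simp
    rw [← this]
    apply intervalIntegral.integral_mono_on (by linarith) intervalIntegrable_const hint
    intro x hx
    exact hm (hIcc ⟨le_refl m, by linarith⟩) (hIcc hx) hx.1
  · rw [← heq]
    have : ∫ _x in m..(m+1), f (m+1) = f (m+1) := by simp
    rw [← this]
    apply intervalIntegral.integral_mono_on (by linarith) hint intervalIntegrable_const
    intro x hx
    exact hm (hIcc hx) (hIcc ⟨by linarith, le_refl _⟩) hx.2

include hd hm hc in
lemma sum_bounds (c : ℝ) (hc1 : 1 ≤ c) (n : ℕ) :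
    F (c + n) - F c - (f (c + n) - f c) ≤ ∑ i ∈ Finset.range n, f (c + i) ∧
      ∑ i ∈ Finset.range n, f (c + i) ≤ F (c + n) - F c := by
  induction n with
  | zero => simp
  | succ n ih =>
    have hcn : (1:ℝ) ≤ c + n := by
      have : (0:ℝ) ≤ (n:ℝ) := Nat.cast_nonneg n
      linarith
    obtain ⟨cl, cu⟩ := cell_bound f F hd hm hc hcn
    have hfmono : f (c + n) ≤ f (c + n + 1) :=
      hm (by exact hcn) (by simp; linarith) (by linarith)
    have hcast : ((n+1 : ℕ) : ℝ) = (n:ℝ) + 1 := by push_cast; ring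
    rw [Finset.sum_range_succ, hcast,
      show c + ((n:ℝ)+1) = c + (n:ℝ) + 1 from by ring]
    constructor
    · linarith [ih.1, ih.2]
    · linarith [ih.2]

include hd hm hc in
lemma sum_near (c : ℝ) (hc1 : 1 ≤ c) (n : ℕ) :
    |∑ i ∈ Finset.range n, f (c + i) - (F (c + n) - F c)| ≤ f (c + n) - f c := by
  obtain ⟨h1, h2⟩ := sum_bounds f F hd hm hc c hc1 n
  rw [abs_le]
  constructor <;> linarith

end generic

noncomputable def LL (m : ℕ) : ℝ := ∑ b ∈ Finset.Icc 1 m, Real.log b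

lemma LL_eq_range (m : ℕ) : LL m = ∑ i ∈ Finset.range m, Real.log (1 + (i:ℝ)) := by
  unfold LL
  rw [← Finset.Ico_add_one_right_eq_Icc, Finset.sum_Ico_eq_sum_range]
  simp only [Nat.add_sub_cancel_left, Nat.succ_sub_one, Nat.add_sub_cancel]
  apply Finset.sum_congr rfl
  intro i _
  push_cast
  ring_nf

lemma hd_log : ∀ x : ℝ, 1 ≤ x → HasDerivAt gg (Real.log x) x :=
  fun x hx => hasDerivAt_gg (lt_of_lt_of_le one_pos hx)

lemma hd_gg : ∀ x : ℝ, 1 ≤ x → HasDerivAt GG (gg x) x :=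
  fun x hx => hasDerivAt_GG (lt_of_lt_of_le one_pos hx)

lemma gg_one : gg 1 = -1 := by simp [gg]

lemma LL_near (m : ℕ) : |LL m - (gg ((m:ℝ) + 1) + 1)| ≤ Real.log ((m:ℝ) + 1) := by
  have h := sum_near Real.log gg hd_log log_monoOn log_contOn 1 le_rfl m
  rw [LL_eq_range]
  simp only [gg_one, Real.log_one] at h
  rw [show (1:ℝ) + (m:ℝ) = (m:ℝ) + 1 from by ring] at h
  rw [show gg ((m:ℝ) + 1) - -1 = gg ((m:ℝ) + 1) + 1 from by ring, sub_zero] at h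
  exact h

lemma innerLogSum (a n : ℕ) (ha : 1 ≤ a) :
    ∑ b ∈ Finset.Icc a (a + n - 1), Real.log b = LL (a + n - 1) - LL (a - 1) := by
  obtain ⟨a', rfl⟩ := Nat.exists_eq_add_of_le ha
  rcases Nat.eq_zero_or_pos n with rfl | hn
  · simp [LL]
  · have h1 : 1 + a' + n - 1 = a' + n := by omega
    have h2 : 1 + a' - 1 = a' := by omega
    rw [h1, h2]
    have h3 : Finset.Icc (1 + a') (a' + n) = Finset.Ioc a' (a' + n) := by
      rw [add_comm 1 a']
      exact Finset.Icc_add_one_left_eq_Ioc a' (a' + n)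
    have h4 : ∀ k : ℕ, LL k = ∑ b ∈ Finset.Ioc 0 k, Real.log b := by
      intro k; unfold LL; rw [← Finset.Icc_add_one_left_eq_Ioc]; rfl
    rw [h3, h4, h4]
    have := Finset.sum_Ioc_consecutive (f := fun b : ℕ => Real.log b)
      (Nat.zero_le a') (Nat.le_add_right a' n)
    linarith [this]

set_option maxHeartbeats 1000000 in
/-- Asymptotic for the log of the superfactorial ratio:
`∑_{a=1}^n ∑_{b=a}^{a+n-1} log b = n² log n − n²(3/2 − log 4) + o(n²)`. -/
theorem log_superfactorial_asymptotic :
    ∀ ε > (0 : ℝ), ∃ N : ℕ, ∀ n ≥ N,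
      |(∑ a ∈ Finset.Icc 1 n, ∑ b ∈ Finset.Icc a (a + n - 1), Real.log b) -
        ((n : ℝ) ^ 2 * Real.log n - (n : ℝ) ^ 2 * (3 / 2 - Real.log 4))| ≤ ε * (n : ℝ) ^ 2 := by
  intro ε hε
  refine ⟨⌈(64 / ε) ^ 2⌉₊ + 1, fun n hn => ?_⟩
  have hn1 : 1 ≤ n := le_trans (Nat.le_add_left 1 _) hn
  have hn1R : (1:ℝ) ≤ (n:ℝ) := by exact_mod_cast hn1
  have hnpos : (0:ℝ) < (n:ℝ) := lt_of_lt_of_le one_pos hn1R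
  -- Step 1 : rewrite the double sum
  have hS : (∑ a ∈ Finset.Icc 1 n, ∑ b ∈ Finset.Icc a (a + n - 1), Real.log b) =
      ∑ i ∈ Finset.range n, (LL (n + i) - LL i) := by
    rw [Finset.sum_congr rfl (fun a ha => innerLogSum a n (Finset.mem_Icc.mp ha).1)]
    rw [← Finset.Ico_add_one_right_eq_Icc, Finset.sum_Ico_eq_sum_range]
    simp only [Nat.add_sub_cancel_left, Nat.succ_sub_one]
    apply Finset.sum_congr rfl
    intro i _
    congr 2 <;> omega
  rw [hS]
  -- abbreviations
  set L2 := Real.log (2 * (n:ℝ) + 1) with hL2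
  have hL2nonneg : 0 ≤ L2 := Real.log_nonneg (by linarith)
  -- Step 2 : replace LL by gg
  have h2 : |∑ i ∈ Finset.range n, (LL (n + i) - LL i) -
      ∑ i ∈ Finset.range n, (gg ((n:ℝ) + 1 + i) - gg (1 + (i:ℝ)))| ≤ 2 * n * L2 := by
    rw [← Finset.sum_sub_distrib]
    calc |∑ i ∈ Finset.range n, (LL (n + i) - LL i - (gg ((n:ℝ) + 1 + i) - gg (1 + (i:ℝ))))|
        ≤ ∑ i ∈ Finset.range n, |LL (n + i) - LL i - (gg ((n:ℝ) + 1 + i) - gg (1 + (i:ℝ)))| :=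
          Finset.abs_sum_le_sum_abs _ _
      _ ≤ ∑ _i ∈ Finset.range n, (2 * L2) := by
          apply Finset.sum_le_sum
          intro i hi
          have hi' : i < n := Finset.mem_range.mp hi
          have e1 := LL_near (n + i)
          have e2 := LL_near i
          have c1 : ((n + i : ℕ) : ℝ) + 1 = (n:ℝ) + 1 + i := by push_cast; ring
          rw [c1] at e1
          have c2 : (i:ℝ) + 1 = 1 + (i:ℝ) := by ring
          rw [c2] at e2
          have b1 : Real.log ((n:ℝ) + 1 + i) ≤ L2 := by
            apply Real.log_le_log (by positivity)
            have : (i:ℝ) ≤ (n:ℝ) := by exact_mod_cast hi'.le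
            linarith
          have b2 : Real.log (1 + (i:ℝ)) ≤ L2 := by
            apply Real.log_le_log (by positivity)
            have : (i:ℝ) ≤ (n:ℝ) := by exact_mod_cast hi'.le
            linarith
          calc |LL (n + i) - LL i - (gg ((n:ℝ) + 1 + i) - gg (1 + (i:ℝ)))|
              = |(LL (n + i) - (gg ((n:ℝ) + 1 + i) + 1)) - (LL i - (gg (1 + (i:ℝ)) + 1))| := by
                ring_nf
            _ ≤ |LL (n + i) - (gg ((n:ℝ) + 1 + i) + 1)| + |LL i - (gg (1 + (i:ℝ)) + 1)| :=
                abs_sub _ _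
            _ ≤ 2 * L2 := by linarith
      _ = 2 * n * L2 := by rw [Finset.sum_const, Finset.card_range]; push_cast; ring
  -- Step 3 : sums of gg vs GG
  have h3 : |∑ i ∈ Finset.range n, gg ((n:ℝ) + 1 + i) -
      (GG (2 * (n:ℝ) + 1) - GG ((n:ℝ) + 1))| ≤ gg (2 * (n:ℝ) + 1) - gg ((n:ℝ) + 1) := by
    have h := sum_near gg GG hd_gg gg_monoOn gg_contOn ((n:ℝ) + 1) (by linarith) n
    rw [show (n:ℝ) + 1 + (n:ℝ) = 2 * (n:ℝ) + 1 from by ring] at h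
    exact h
  have h4 : |∑ i ∈ Finset.range n, gg (1 + (i:ℝ)) - (GG ((n:ℝ) + 1) - GG 1)| ≤
      gg ((n:ℝ) + 1) - gg 1 := by
    have h := sum_near gg GG hd_gg gg_monoOn gg_contOn 1 le_rfl n
    rw [show (1:ℝ) + (n:ℝ) = (n:ℝ) + 1 from by ring] at h
    exact h
  -- cell bounds for the shift
  have h6 := cell_bound gg GG hd_gg gg_monoOn gg_contOn (m := 2 * (n:ℝ)) (by linarith)
  have h7 := cell_bound gg GG hd_gg gg_monoOn gg_contOn (m := (n:ℝ)) hn1R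
  -- monotonicity facts
  have m1 : gg 1 ≤ gg (2 * (n:ℝ)) :=
    gg_monoOn (Set.mem_Ici.mpr le_rfl) (Set.mem_Ici.mpr (by linarith)) (by linarith)
  have m2 : gg 1 ≤ gg ((n:ℝ)) :=
    gg_monoOn (Set.mem_Ici.mpr le_rfl) (Set.mem_Ici.mpr hn1R) hn1R
  have m3 : gg ((n:ℝ) + 1) ≤ gg (2 * (n:ℝ) + 1) :=
    gg_monoOn (Set.mem_Ici.mpr (by linarith)) (Set.mem_Ici.mpr (by linarith)) (by linarith)
  have m4 : gg 1 ≤ gg ((n:ℝ) + 1) :=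
    gg_monoOn (Set.mem_Ici.mpr le_rfl) (Set.mem_Ici.mpr (by linarith)) (by linarith)
  have m5 : gg 1 ≤ gg (2 * (n:ℝ) + 1) :=
    gg_monoOn (Set.mem_Ici.mpr le_rfl) (Set.mem_Ici.mpr (by linarith)) (by linarith)
  -- gg upper bound
  have hggub : gg (2 * (n:ℝ) + 1) ≤ 3 * n * L2 := by
    have : gg (2 * (n:ℝ) + 1) = (2 * (n:ℝ) + 1) * L2 - (2 * (n:ℝ) + 1) := by rfl
    rw [this]
    nlinarith [hL2nonneg, hnpos]
  -- main exact identity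
  have h8 : GG (2 * (n:ℝ)) - 2 * GG (n:ℝ) + GG 1 =
      ((n:ℝ) ^ 2 * Real.log n - (n:ℝ) ^ 2 * (3 / 2 - Real.log 4)) - 3 / 4 := by
    have hlog2n : Real.log (2 * (n:ℝ)) = Real.log 2 + Real.log (n:ℝ) :=
      Real.log_mul (by norm_num) (by positivity)
    have hlog4 : Real.log (4:ℝ) = 2 * Real.log 2 := by
      rw [show (4:ℝ) = 2 ^ 2 from by norm_num, Real.log_pow]
      push_cast; ring
    simp only [GG, hlog2n, hlog4, Real.log_one]
    ring
  -- assemble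
  have total : |∑ i ∈ Finset.range n, (LL (n + i) - LL i) -
      ((n:ℝ) ^ 2 * Real.log n - (n:ℝ) ^ 2 * (3 / 2 - Real.log 4))| ≤
      14 * n * L2 + 8 := by
    have t1 : |∑ i ∈ Finset.range n, (LL (n + i) - LL i) -
        (GG (2 * (n:ℝ) + 1) - 2 * GG ((n:ℝ) + 1) + GG 1)| ≤
        2 * n * L2 + (gg (2 * (n:ℝ) + 1) - gg 1) := by
      calc |∑ i ∈ Finset.range n, (LL (n + i) - LL i) -
          (GG (2 * (n:ℝ) + 1) - 2 * GG ((n:ℝ) + 1) + GG 1)|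
          ≤ |∑ i ∈ Finset.range n, (LL (n + i) - LL i) -
              ∑ i ∈ Finset.range n, (gg ((n:ℝ) + 1 + i) - gg (1 + (i:ℝ)))| +
            |∑ i ∈ Finset.range n, (gg ((n:ℝ) + 1 + i) - gg (1 + (i:ℝ))) -
              (GG (2 * (n:ℝ) + 1) - 2 * GG ((n:ℝ) + 1) + GG 1)| := abs_sub_le _ _ _
        _ ≤ 2 * n * L2 + (gg (2 * (n:ℝ) + 1) - gg 1) := by
            have hsplit : ∑ i ∈ Finset.range n, (gg ((n:ℝ) + 1 + i) - gg (1 + (i:ℝ))) =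
                ∑ i ∈ Finset.range n, gg ((n:ℝ) + 1 + i) -
                ∑ i ∈ Finset.range n, gg (1 + (i:ℝ)) := Finset.sum_sub_distrib _ _
            have t2 : |∑ i ∈ Finset.range n, (gg ((n:ℝ) + 1 + i) - gg (1 + (i:ℝ))) -
                (GG (2 * (n:ℝ) + 1) - 2 * GG ((n:ℝ) + 1) + GG 1)| ≤
                (gg (2 * (n:ℝ) + 1) - gg ((n:ℝ) + 1)) + (gg ((n:ℝ) + 1) - gg 1) := by
              rw [hsplit]
              have key : ∑ i ∈ Finset.range n, gg ((n:ℝ) + 1 + i) -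
                  ∑ i ∈ Finset.range n, gg (1 + (i:ℝ)) -
                  (GG (2 * (n:ℝ) + 1) - 2 * GG ((n:ℝ) + 1) + GG 1) =
                  (∑ i ∈ Finset.range n, gg ((n:ℝ) + 1 + i) -
                    (GG (2 * (n:ℝ) + 1) - GG ((n:ℝ) + 1))) -
                  (∑ i ∈ Finset.range n, gg (1 + (i:ℝ)) - (GG ((n:ℝ) + 1) - GG 1)) := by
                ring
              rw [key]
              calc _ ≤ |∑ i ∈ Finset.range n, gg ((n:ℝ) + 1 + i) -
                    (GG (2 * (n:ℝ) + 1) - GG ((n:ℝ) + 1))| +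
                  |∑ i ∈ Finset.range n, gg (1 + (i:ℝ)) - (GG ((n:ℝ) + 1) - GG 1)| :=
                    abs_sub _ _
                _ ≤ _ := by linarith
            linarith [h2, t2]
    -- shift from 2n+1, n+1 to 2n, n
    have t3 : |(GG (2 * (n:ℝ) + 1) - 2 * GG ((n:ℝ) + 1) + GG 1) -
        (GG (2 * (n:ℝ)) - 2 * GG (n:ℝ) + GG 1)| ≤ 3 * (gg (2 * (n:ℝ) + 1) + 2) := by
      rw [gg_one] at m1 m2 m5
      have s1 : |GG (2 * (n:ℝ) + 1) - GG (2 * (n:ℝ))| ≤ gg (2 * (n:ℝ) + 1) + 2 := by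
        rw [abs_le]
        constructor <;> linarith [h6.1, h6.2, m1, m5]
      have s2 : |GG ((n:ℝ) + 1) - GG (n:ℝ)| ≤ gg (2 * (n:ℝ) + 1) + 2 := by
        rw [abs_le]
        constructor <;> linarith [h7.1, h7.2, m2, m3, m5]
      calc |(GG (2 * (n:ℝ) + 1) - 2 * GG ((n:ℝ) + 1) + GG 1) -
          (GG (2 * (n:ℝ)) - 2 * GG (n:ℝ) + GG 1)|
          = |(GG (2 * (n:ℝ) + 1) - GG (2 * (n:ℝ))) - 2 * (GG ((n:ℝ) + 1) - GG (n:ℝ))| := by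
            ring_nf
        _ ≤ |GG (2 * (n:ℝ) + 1) - GG (2 * (n:ℝ))| + 2 * |GG ((n:ℝ) + 1) - GG (n:ℝ)| := by
            have := abs_sub (GG (2 * (n:ℝ) + 1) - GG (2 * (n:ℝ)))
              (2 * (GG ((n:ℝ) + 1) - GG (n:ℝ)))
            rw [abs_mul] at this
            simpa [abs_of_nonneg] using this
        _ ≤ 3 * (gg (2 * (n:ℝ) + 1) + 2) := by linarith
    have hgg1 : gg 1 = -1 := gg_one
    calc |∑ i ∈ Finset.range n, (LL (n + i) - LL i) -
        ((n:ℝ) ^ 2 * Real.log n - (n:ℝ) ^ 2 * (3 / 2 - Real.log 4))|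
        ≤ |∑ i ∈ Finset.range n, (LL (n + i) - LL i) -
            (GG (2 * (n:ℝ) + 1) - 2 * GG ((n:ℝ) + 1) + GG 1)| +
          |(GG (2 * (n:ℝ) + 1) - 2 * GG ((n:ℝ) + 1) + GG 1) -
            ((n:ℝ) ^ 2 * Real.log n - (n:ℝ) ^ 2 * (3 / 2 - Real.log 4))| := abs_sub_le _ _ _
      _ ≤ |∑ i ∈ Finset.range n, (LL (n + i) - LL i) -
            (GG (2 * (n:ℝ) + 1) - 2 * GG ((n:ℝ) + 1) + GG 1)| +
          (|(GG (2 * (n:ℝ) + 1) - 2 * GG ((n:ℝ) + 1) + GG 1) -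
            (GG (2 * (n:ℝ)) - 2 * GG (n:ℝ) + GG 1)| +
           |(GG (2 * (n:ℝ)) - 2 * GG (n:ℝ) + GG 1) -
            ((n:ℝ) ^ 2 * Real.log n - (n:ℝ) ^ 2 * (3 / 2 - Real.log 4))|) := by
          linarith [abs_sub_le ((GG (2 * (n:ℝ) + 1) - 2 * GG ((n:ℝ) + 1) + GG 1))
            ((GG (2 * (n:ℝ)) - 2 * GG (n:ℝ) + GG 1))
            ((n:ℝ) ^ 2 * Real.log n - (n:ℝ) ^ 2 * (3 / 2 - Real.log 4))]
      _ ≤ 14 * n * L2 + 8 := by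
          have hlast : |(GG (2 * (n:ℝ)) - 2 * GG (n:ℝ) + GG 1) -
              ((n:ℝ) ^ 2 * Real.log n - (n:ℝ) ^ 2 * (3 / 2 - Real.log 4))| = 3 / 4 := by
            rw [h8]; norm_num
          rw [hlast]
          rw [hgg1] at t1
          linarith [t1, t3, hggub]
  -- final epsilon bookkeeping
  have hsq : Real.sqrt n * Real.sqrt n = (n:ℝ) := Real.mul_self_sqrt hnpos.le
  have hsq1 : (1:ℝ) ≤ Real.sqrt n := by
    rw [show (1:ℝ) = Real.sqrt 1 from (Real.sqrt_one).symm]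
    exact Real.sqrt_le_sqrt hn1R
  have hlogbound : L2 ≤ 4 * Real.sqrt n := by
    have e1 : L2 = 2 * Real.log (Real.sqrt (2 * (n:ℝ) + 1)) := by
      rw [hL2, Real.log_sqrt (by linarith)]; ring
    have e2 : Real.log (Real.sqrt (2 * (n:ℝ) + 1)) ≤ Real.sqrt (2 * (n:ℝ) + 1) - 1 :=
      Real.log_le_sub_one_of_pos (Real.sqrt_pos.mpr (by linarith))
    have e3 : Real.sqrt (2 * (n:ℝ) + 1) ≤ 2 * Real.sqrt n := by
      rw [show (2:ℝ) * Real.sqrt n = Real.sqrt 4 * Real.sqrt n from by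
        rw [show (4:ℝ) = 2 ^ 2 from by norm_num, Real.sqrt_sq (by norm_num : (0:ℝ) ≤ 2)],
        ← Real.sqrt_mul (by norm_num : (0:ℝ) ≤ 4)]
      exact Real.sqrt_le_sqrt (by linarith)
    linarith
  have hceil : ((64 / ε) ^ 2 : ℝ) ≤ (n:ℝ) := by
    calc ((64 / ε) ^ 2 : ℝ) ≤ (⌈(64 / ε) ^ 2⌉₊ : ℝ) := Nat.le_ceil _
      _ ≤ (n:ℝ) := by
        have : ⌈(64 / ε) ^ 2⌉₊ ≤ n := le_trans (Nat.le_add_right _ 1) hn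
        exact_mod_cast this
  have hkey : (64:ℝ) ≤ ε * Real.sqrt n := by
    have h64 : (0:ℝ) ≤ 64 / ε := by positivity
    have : 64 / ε ≤ Real.sqrt n := by
      rw [show (64 / ε : ℝ) = Real.sqrt ((64 / ε) ^ 2) from
        (Real.sqrt_sq h64).symm]
      exact Real.sqrt_le_sqrt hceil
    calc (64:ℝ) = ε * (64 / ε) := by field_simp
      _ ≤ ε * Real.sqrt n := by nlinarith
  calc |∑ i ∈ Finset.range n, (LL (n + i) - LL i) -
      ((n:ℝ) ^ 2 * Real.log n - (n:ℝ) ^ 2 * (3 / 2 - Real.log 4))|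
      ≤ 14 * n * L2 + 8 := total
    _ ≤ 64 * ((n:ℝ) * Real.sqrt n) := by
        have b1 : 14 * (n:ℝ) * L2 ≤ 14 * (n:ℝ) * (4 * Real.sqrt n) :=
          mul_le_mul_of_nonneg_left hlogbound (by positivity)
        have b2 : (1:ℝ) ≤ (n:ℝ) * Real.sqrt n := by nlinarith [hn1R, hsq1]
        nlinarith [b1, b2]
    _ ≤ ε * (n:ℝ) ^ 2 := by
        have b3 : 64 * ((n:ℝ) * Real.sqrt n) ≤ (ε * Real.sqrt n) * ((n:ℝ) * Real.sqrt n) :=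
          mul_le_mul_of_nonneg_right hkey (by positivity)
        have b4 : (ε * Real.sqrt n) * ((n:ℝ) * Real.sqrt n) = ε * ((n:ℝ) * (Real.sqrt n * Real.sqrt n)) := by
          ring
        rw [b4, hsq] at b3
        calc 64 * ((n:ℝ) * Real.sqrt n) ≤ ε * ((n:ℝ) * (n:ℝ)) := b3
          _ = ε * (n:ℝ) ^ 2 := by ring
end

section
/- Multiplying each permutation in a Latin square (σ₁,...,σₙ) on the left by a fixed transposition τ yields another Latin square, and this operation changes the sign of the Latin square by the factor (-1)^n. Consequently this gives a sign-reversing involution on Latin squares when n is odd. -/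
open Finset

/-- Left-multiplying each permutation of a Latin square by a fixed transposition `τ` yields
another Latin square, and changes its sign by the factor `(-1)^n`. -/
theorem swap_mul_latin (n : ℕ) (τ : Equiv.Perm (Fin n)) (hτ : τ.IsSwap)
    (σ : Fin n → Equiv.Perm (Fin n)) (hσ : IsLatin σ) :
    IsLatin (fun i => τ * σ i) ∧
      signLS (fun i => τ * σ i) = (-1) ^ n * signLS σ := by
  constructor
  · intro i j
    have := hσ i (τ⁻¹ j)
    rw [← this]
    congr 1
    ext m
    simp only [Finset.mem_filter, Finset.mem_univ, true_and, Equiv.Perm.mul_apply]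
    constructor
    · intro h; have h' := (Finset.mem_filter.mp h).2; simp [← h']
    · intro h; exact Finset.mem_filter.mpr ⟨Finset.mem_univ _, by simp [h]⟩
  · unfold signLS
    simp only [map_mul, Equiv.Perm.IsSwap.sign_eq hτ]
    rw [Finset.prod_mul_distrib, Finset.prod_const, Finset.card_univ, Fintype.card_fin, mul_left_comm]
end
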